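/- The normed space (ℓ∞, |||·|||), where |||x||| = ‖x‖_∞ + Σ_n r_n |⟨x, v_n⟩| with (v_n) dense in the unit sphere of ℓ₁ and r_n > 0 summable, is strictly convex: if |||x||| = |||y||| = 1 and x ≠ y, then |||x + y||| < 2. -/

import Mathlib

open Filter Topology

/-- The sup norm of a real sequence. -/
noncomputable def supNorm (x : ℕ → ℝ) : ℝ := ⨆ k, |x k|

/-- The duality pairing `⟨x, v⟩ = ∑ₖ x k * v k`. -/
noncomputable def pairing (x v : ℕ → ℝ) : ℝ := ∑' k, x k * v k

/-- Read's norm `|||x||| = ‖x‖_∞ + ∑ₙ rₙ |⟨x, vₙ⟩|`. -/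
noncomputable def readNorm (r : ℕ → ℝ) (v : ℕ → ℕ → ℝ) (x : ℕ → ℝ) : ℝ :=
  supNorm x + ∑' n, r n * |pairing x (v n)|

lemma summable_abs_mul {x w : ℕ → ℝ} {C : ℝ} (hx : ∀ k, |x k| ≤ C)
    (hw : Summable fun k => |w k|) : Summable fun k => |x k * w k| := by
  refine Summable.of_nonneg_of_le (fun k => abs_nonneg _) (fun k => ?_) (hw.mul_left C)
  rw [abs_mul]
  exact mul_le_mul_of_nonneg_right (hx k) (abs_nonneg _)

lemma summable_mul {x w : ℕ → ℝ} {C : ℝ} (hx : ∀ k, |x k| ≤ C)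
    (hw : Summable fun k => |w k|) : Summable fun k => x k * w k := by
  have := summable_abs_mul hx hw
  exact this.of_abs

lemma abs_pairing_le {x w : ℕ → ℝ} {C : ℝ} (hC : 0 ≤ C) (hx : ∀ k, |x k| ≤ C)
    (hw : Summable fun k => |w k|) : |pairing x w| ≤ C * ∑' k, |w k| := by
  have h1 : |pairing x w| ≤ ∑' k, |x k * w k| := by
    have := norm_tsum_le_tsum_norm (f := fun k => x k * w k)
      (by simpa only [Real.norm_eq_abs] using summable_abs_mul hx hw)
    simpa only [Real.norm_eq_abs, pairing] using this
  refine h1.trans ?_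
  rw [← tsum_mul_left]
  refine Summable.tsum_le_tsum (fun k => ?_) (summable_abs_mul hx hw) (hw.mul_left C)
  rw [abs_mul]
  exact mul_le_mul_of_nonneg_right (hx k) (abs_nonneg _)

lemma pairing_sub_right {x w w' : ℕ → ℝ} {C : ℝ} (hx : ∀ k, |x k| ≤ C)
    (hw : Summable fun k => |w k|) (hw' : Summable fun k => |w' k|) :
    pairing x w - pairing x w' = pairing x (fun k => w k - w' k) := by
  unfold pairing
  rw [← Summable.tsum_sub (summable_mul hx hw) (summable_mul hx hw')]
  exact tsum_congr fun k => by ring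

lemma pairing_add_left {x y w : ℕ → ℝ} {C : ℝ} (hx : ∀ k, |x k| ≤ C) (hy : ∀ k, |y k| ≤ C)
    (hw : Summable fun k => |w k|) :
    pairing (x + y) w = pairing x w + pairing y w := by
  unfold pairing
  rw [← Summable.tsum_add (summable_mul hx hw) (summable_mul hy hw)]
  exact tsum_congr fun k => by simp [Pi.add_apply]; ring

lemma readNorm_zero (r : ℕ → ℝ) (v : ℕ → ℕ → ℝ) : readNorm r v 0 = 0 := by
  simp [readNorm, supNorm, pairing, ciSup_const]

lemma exists_good_index {v : ℕ → ℕ → ℝ} (hv1 : ∀ n, Summable fun k => |v n k|)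
    (hdense : ∀ w : ℕ → ℝ, (Summable fun k => |w k|) → ∑' k, |w k| = 1 →
      ∀ ε > 0, ∃ n, ∑' k, |w k - v n k| < ε)
    {x y : ℕ → ℝ} {C : ℝ} (hC0 : 0 ≤ C) (hxC : ∀ k, |x k| ≤ C) (hyC : ∀ k, |y k| ≤ C)
    {w : ℕ → ℝ} (hws : Summable fun k => |w k|) (hw1 : ∑' k, |w k| = 1)
    (hpx : 0 < pairing x w) (hpy : pairing y w < 0) :
    ∃ n, 0 < pairing x (v n) ∧ pairing y (v n) < 0 := by
  set m : ℝ := min (pairing x w) (-pairing y w) with hmdef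
  have hm : 0 < m := lt_min hpx (by linarith)
  have hC1 : (0:ℝ) < C + 1 := by linarith
  set ε : ℝ := m / (C + 1) with hεdef
  have hε : 0 < ε := div_pos hm hC1
  obtain ⟨n, hn⟩ := hdense w hws hw1 ε hε
  have hd : Summable fun k => |w k - v n k| := by
    refine Summable.of_nonneg_of_le (fun k => abs_nonneg _) (fun k => ?_) (hws.add (hv1 n))
    exact (abs_sub _ _)
  have hCe : C * ε < m := by
    have h : ε * (C + 1) = m := div_mul_cancel₀ _ (ne_of_gt hC1)
    nlinarith [hε]
  have key : ∀ z : ℕ → ℝ, (∀ k, |z k| ≤ C) →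
      |pairing z w - pairing z (v n)| ≤ C * ε := by
    intro z hz
    rw [pairing_sub_right hz hws (hv1 n)]
    calc |pairing z (fun k => w k - v n k)| ≤ C * ∑' k, |w k - v n k| :=
          abs_pairing_le hC0 hz hd
      _ ≤ C * ε := mul_le_mul_of_nonneg_left hn.le hC0
  have hkx := abs_le.mp (key x hxC)
  have hky := abs_le.mp (key y hyC)
  have hmx : m ≤ pairing x w := min_le_left _ _
  have hmy : m ≤ -pairing y w := min_le_right _ _
  exact ⟨n, by linarith [hkx.2], by linarith [hky.2]⟩

/-- `(ℓ∞, |||·|||)` is strictly convex, where `|||x||| = ‖x‖_∞ + ∑ₙ rₙ |⟨x, vₙ⟩|` with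
`(vₙ)` dense in the unit sphere of `ℓ₁` and `rₙ > 0` summable: if
`|||x||| = |||y||| = 1` and `x ≠ y`, then `|||x + y||| < 2`. -/
theorem bidual_read_norm_strictly_convex
    (r : ℕ → ℝ) (hrpos : ∀ n, 0 < r n) (hrsum : Summable r)
    (v : ℕ → ℕ → ℝ) (hv1 : ∀ n, Summable fun k => |v n k|)
    (hv2 : ∀ n, ∑' k, |v n k| = 1)
    (hdense : ∀ w : ℕ → ℝ, (Summable fun k => |w k|) → ∑' k, |w k| = 1 →
      ∀ ε > 0, ∃ n, ∑' k, |w k - v n k| < ε)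
    (x y : ℕ → ℝ) (hx : ∃ C, ∀ k, |x k| ≤ C) (hy : ∃ C, ∀ k, |y k| ≤ C)
    (hx1 : readNorm r v x = 1) (hy1 : readNorm r v y = 1) (hne : x ≠ y) :
    readNorm r v (x + y) < 2 := by
  obtain ⟨Cx, hCx⟩ := hx
  obtain ⟨Cy, hCy⟩ := hy
  set C : ℝ := max Cx Cy with hCdef
  have hxC : ∀ k, |x k| ≤ C := fun k => (hCx k).trans (le_max_left _ _)
  have hyC : ∀ k, |y k| ≤ C := fun k => (hCy k).trans (le_max_right _ _)
  have hC0 : 0 ≤ C := (abs_nonneg (x 0)).trans (hxC 0)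
  by_cases hdet : ∃ j k, x j * y k ≠ x k * y j
  · -- a separating functional exists
    obtain ⟨j, k, hjk⟩ := hdet
    have hd : x j * y k - x k * y j ≠ 0 := sub_ne_zero.mpr hjk
    have hjkne : j ≠ k := by
      intro h; subst h; exact hjk (by ring)
    obtain ⟨a, b, key1, key2⟩ : ∃ a b : ℝ,
        a * x j + b * x k = 1 ∧ a * y j + b * y k = -1 := by
      refine ⟨(y k + x k) / (x j * y k - x k * y j),
        (-x j - y j) / (x j * y k - x k * y j), ?_, ?_⟩ <;>
        (rw [div_mul_eq_mul_div, div_mul_eq_mul_div, ← add_div, div_eq_iff hd]; ring)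
    have hab : a ≠ 0 ∨ b ≠ 0 := by
      by_contra h
      push_neg at h
      rw [h.1, h.2] at key1
      norm_num at key1
    obtain ⟨s, hs, hsa⟩ : ∃ s : ℝ, 0 < s ∧ |a| + |b| = s := by
      refine ⟨|a| + |b|, ?_, rfl⟩
      rcases hab with h | h
      · exact add_pos_of_pos_of_nonneg (abs_pos.mpr h) (abs_nonneg _)
      · exact add_pos_of_nonneg_of_pos (abs_nonneg _) (abs_pos.mpr h)
    obtain ⟨w, hwsupp, hwj, hwk⟩ : ∃ w : ℕ → ℝ,
        (∀ m ∉ ({j, k} : Finset ℕ), w m = 0) ∧ w j = a / s ∧ w k = b / s := by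
      refine ⟨fun m => if m = j then a / s else if m = k then b / s else 0, ?_, ?_, ?_⟩
      · intro m hm
        simp only [Finset.mem_insert, Finset.mem_singleton, not_or] at hm
        simp [hm.1, hm.2]
      · simp
      · simp [Ne.symm hjkne, hjkne]
    have hws : Summable fun m => |w m| :=
      summable_of_ne_finset_zero (s := {j, k}) (fun m hm => by rw [hwsupp m hm, abs_zero])
    have hw1 : ∑' m, |w m| = 1 := by
      rw [tsum_eq_sum (s := {j, k}) (fun m hm => by rw [hwsupp m hm, abs_zero]),
        Finset.sum_pair hjkne, hwj, hwk, abs_div, abs_div, abs_of_pos hs,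
        ← add_div, hsa, div_self (ne_of_gt hs)]
    have pair_calc : ∀ z : ℕ → ℝ, pairing z w = (a * z j + b * z k) / s := by
      intro z
      unfold pairing
      rw [tsum_eq_sum (s := {j, k}) (fun m hm => by rw [hwsupp m hm, mul_zero]),
        Finset.sum_pair hjkne, hwj, hwk]
      field_simp
    have hpx : 0 < pairing x w := by
      rw [pair_calc, key1]; positivity
    have hpy : pairing y w < 0 := by
      rw [pair_calc, key2]
      exact div_neg_of_neg_of_pos (by norm_num) hs
    obtain ⟨n0, hn0x, hn0y⟩ :=
      exists_good_index hv1 hdense hC0 hxC hyC hws hw1 hpx hpy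
    -- summabilities of the weighted series
    have hsumz : ∀ (z : ℕ → ℝ) (D : ℝ), 0 ≤ D → (∀ k, |z k| ≤ D) →
        Summable fun n => r n * |pairing z (v n)| := by
      intro z D hD0 hzD
      refine Summable.of_nonneg_of_le
        (fun n => mul_nonneg (hrpos n).le (abs_nonneg _)) (fun n => ?_) (hrsum.mul_right D)
      have := abs_pairing_le hD0 hzD (hv1 n)
      rw [hv2 n, mul_one] at this
      exact mul_le_mul_of_nonneg_left this (hrpos n).le
    have hSx : Summable fun n => r n * |pairing x (v n)| := hsumz x C hC0 hxC
    have hSy : Summable fun n => r n * |pairing y (v n)| := hsumz y C hC0 hyC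
    have hpadd : ∀ n, pairing (x + y) (v n) = pairing x (v n) + pairing y (v n) :=
      fun n => pairing_add_left hxC hyC (hv1 n)
    have hle : ∀ n, r n * |pairing (x + y) (v n)| ≤
        r n * |pairing x (v n)| + r n * |pairing y (v n)| := by
      intro n
      rw [hpadd n, ← mul_add]
      exact mul_le_mul_of_nonneg_left (abs_add_le _ _) (hrpos n).le
    have hlt : r n0 * |pairing (x + y) (v n0)| <
        r n0 * |pairing x (v n0)| + r n0 * |pairing y (v n0)| := by
      rw [hpadd n0, ← mul_add]
      refine mul_lt_mul_of_pos_left ?_ (hrpos n0)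
      set p := pairing x (v n0)
      set q := pairing y (v n0)
      rw [abs_of_pos hn0x, abs_of_neg hn0y]
      rcases le_or_gt 0 (p + q) with h | h
      · rw [abs_of_nonneg h]; linarith
      · rw [abs_of_neg h]; linarith
    have htsum : (∑' n, r n * |pairing (x + y) (v n)|) <
        (∑' n, r n * |pairing x (v n)|) + ∑' n, r n * |pairing y (v n)| := by
      calc (∑' n, r n * |pairing (x + y) (v n)|)
          < ∑' n, (r n * |pairing x (v n)| + r n * |pairing y (v n)|) := by
            refine Summable.tsum_lt_tsum_of_nonneg
              (fun n => mul_nonneg (hrpos n).le (abs_nonneg _)) hle hlt (hSx.add hSy)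
        _ = (∑' n, r n * |pairing x (v n)|) + ∑' n, r n * |pairing y (v n)| :=
            Summable.tsum_add hSx hSy
    have hbddx : BddAbove (Set.range fun k => |x k|) := ⟨C, by rintro _ ⟨k, rfl⟩; exact hxC k⟩
    have hbddy : BddAbove (Set.range fun k => |y k|) := ⟨C, by rintro _ ⟨k, rfl⟩; exact hyC k⟩
    have hsup : supNorm (x + y) ≤ supNorm x + supNorm y := by
      refine ciSup_le fun k => ?_
      calc |(x + y) k| ≤ |x k| + |y k| := abs_add_le _ _
        _ ≤ supNorm x + supNorm y := add_le_add (le_ciSup hbddx k) (le_ciSup hbddy k)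
    have h2 : readNorm r v x + readNorm r v y = 2 := by rw [hx1, hy1]; norm_num
    unfold readNorm at h2 ⊢
    linarith
  · -- y is a scalar multiple of x
    push_neg at hdet
    have hx0 : x ≠ 0 := by
      intro h
      rw [h, readNorm_zero] at hx1
      norm_num at hx1
    obtain ⟨k0, hk0⟩ : ∃ k0, x k0 ≠ 0 := by
      by_contra h
      push_neg at h
      exact hx0 (funext fun k => h k)
    set lam : ℝ := y k0 / x k0 with hlamdef
    have hyx : ∀ k, y k = lam * x k := by
      intro k
      have := hdet k k0
      rw [hlamdef, div_mul_eq_mul_div, eq_div_iff hk0]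
      linarith [this]
    -- homogeneity: readNorm y = |lam| * readNorm x
    have hsup : supNorm y = |lam| * supNorm x := by
      unfold supNorm
      rw [Real.mul_iSup_of_nonneg (abs_nonneg lam)]
      exact iSup_congr fun k => by rw [hyx k, abs_mul]
    have hpair : ∀ w : ℕ → ℝ, pairing y w = lam * pairing x w := by
      intro w
      unfold pairing
      rw [← tsum_mul_left]
      exact tsum_congr fun k => by rw [hyx k]; ring
    have htsum : (∑' n, r n * |pairing y (v n)|) =
        |lam| * ∑' n, r n * |pairing x (v n)| := by
      rw [← tsum_mul_left]
      exact tsum_congr fun n => by rw [hpair (v n), abs_mul]; ring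
    have hhom : readNorm r v y = |lam| * readNorm r v x := by
      unfold readNorm
      rw [hsup, htsum, mul_add]
    rw [hx1, hy1, mul_one] at hhom
    have hlam1 : lam = 1 ∨ lam = -1 :=
      (abs_eq (by norm_num : (0:ℝ) ≤ 1)).mp hhom.symm
    rcases hlam1 with h | h
    · exact absurd (funext fun k => ((hyx k).trans (by rw [h, one_mul])).symm) hne
    · have hxy0 : x + y = 0 := by
        funext k
        have := hyx k
        rw [h] at this
        simp [Pi.add_apply, this]
      rw [hxy0, readNorm_zero]
      norm_num
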